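/- Let α and ι be types, let f : α → ι, and let r ≥ 1 and k ≥ 0 be integers. Let X be a finite set of elements of α such that for every F ⊆ X with |F| ≤ k the image of X \ F under f has at least r elements, and suppose X is inclusion-minimal with this property (no proper subset X' ⊊ X satisfies: for every F ⊆ X' with |F| ≤ k, |(X' \ F).image f| ≥ r). Then there exists an integer s ≥ 1 such that |X| = s·(r−1) + k + 1 and, for every i : ι, the fiber {x ∈ X : f x = i} has at most s elements. -/

import Mathlib

/-- Lemma 7(ii) for partition matroids with unit capacities: Let `X` be
a finite set such that for every `F ⊆ X` with `|F| ≤ k` the image of `X \ F` under `f`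
has at least `r ≥ 1` elements, and suppose `X` is inclusion-minimal with this property.
Then there is `s ≥ 1` with `|X| = s·(r−1) + k + 1` and every fiber of `f` in `X` has at
most `s` elements. -/
theorem statement11 {α ι : Type*} [DecidableEq α] [DecidableEq ι]
    (f : α → ι) (r k : ℕ) (hr : 1 ≤ r)
    (X : Finset α)
    (hX : ∀ F ⊆ X, F.card ≤ k → r ≤ ((X \ F).image f).card)
    (hmin : ∀ X' : Finset α, X' ⊂ X →
      ¬ (∀ F ⊆ X', F.card ≤ k → r ≤ ((X' \ F).image f).card)) :
    ∃ s : ℕ, 1 ≤ s ∧ X.card = s * (r - 1) + k + 1 ∧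
      ∀ i : ι, (X.filter (fun x => f x = i)).card ≤ s := by
  classical
  -- Key reformulation: after removing any < r values, more than k elements remain.
  have hQ : ∀ S : Finset ι, S.card < r → k < (X.filter (fun x => f x ∉ S)).card := by
    intro S hS
    by_contra h
    push_neg at h
    have h2 := hX (X.filter (fun x => f x ∉ S)) (Finset.filter_subset _ _) h
    have hXd : X \ X.filter (fun x => f x ∉ S) = X.filter (fun x => f x ∈ S) := by
      ext y
      simp only [Finset.mem_sdiff, Finset.mem_filter, not_and, not_not]
      tauto
    rw [hXd] at h2
    have h3 : (X.filter (fun x => f x ∈ S)).image f ⊆ S := by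
      intro i hi
      simp only [Finset.mem_image, Finset.mem_filter] at hi
      obtain ⟨y, ⟨_, hy⟩, rfl⟩ := hi
      exact hy
    have h4 := Finset.card_le_card h3
    omega
  have hXne : X.Nonempty := by
    have h0 := hQ ∅ (by simp only [Finset.card_empty]; omega)
    have h1 := Finset.card_filter_le X (fun x => f x ∉ (∅ : Finset ι))
    exact Finset.card_pos.mp (by omega)
  -- s = max fiber size, attained at value i0 = f x
  set s := (X.image f).sup (fun i => (X.filter (fun x => f x = i)).card) with hsdef
  obtain ⟨i0, hi0mem, hi0⟩ := Finset.exists_mem_eq_sup (X.image f) (hXne.image f)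
    (fun i => (X.filter (fun x => f x = i)).card)
  obtain ⟨x, hxX, hfx⟩ := Finset.mem_image.mp hi0mem
  have hi0' : s = (X.filter (fun y => f y = i0)).card := hi0
  have hfib_le : ∀ i : ι, (X.filter (fun y => f y = i)).card ≤ s := by
    intro i
    by_cases hi : i ∈ X.image f
    · have h := Finset.le_sup (f := fun i => (X.filter (fun x => f x = i)).card) hi
      exact h
    · have he : X.filter (fun y => f y = i) = ∅ := by
        apply Finset.filter_eq_empty_iff.mpr
        intro y hy h
        exact hi (Finset.mem_image.mpr ⟨y, hy, h⟩)
      simp [he]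
  have hs1 : 1 ≤ s := by
    have hxm : x ∈ X.filter (fun y => f y = i0) := Finset.mem_filter.mpr ⟨hxX, hfx⟩
    have := Finset.card_pos.mpr ⟨x, hxm⟩
    omega
  -- use minimality at x
  have hmx := hmin (X.erase x) (Finset.erase_ssubset hxX)
  push_neg at hmx
  obtain ⟨F, hFsub, hFk, hFr⟩ := hmx
  set S := ((X.erase x \ F).image f) with hSdef
  have hScard : S.card < r := hFr
  have herase_sub : (X.erase x).filter (fun y => f y ∉ S) ⊆ F := by
    intro y hy
    rw [Finset.mem_filter] at hy
    by_contra hyF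
    exact hy.2 (Finset.mem_image.mpr ⟨y, Finset.mem_sdiff.mpr ⟨hy.1, hyF⟩, rfl⟩)
  have hcompl_erase : ((X.erase x).filter (fun y => f y ∉ S)).card ≤ k :=
    le_trans (Finset.card_le_card herase_sub) hFk
  have hQS := hQ S hScard
  have hfe : (X.erase x).filter (fun y => f y ∉ S) = (X.filter (fun y => f y ∉ S)).erase x := by
    rw [Finset.filter_erase]
  rw [hfe] at hcompl_erase
  have hxin : x ∈ X.filter (fun y => f y ∉ S) := by
    by_contra hx
    rw [Finset.erase_eq_of_notMem hx] at hcompl_erase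
    omega
  have hcard_compl : (X.filter (fun y => f y ∉ S)).card = k + 1 := by
    have h1 := Finset.card_erase_of_mem hxin
    have h2 := Finset.card_pos.mpr ⟨x, hxin⟩
    omega
  have hfxS : i0 ∉ S := by
    have := (Finset.mem_filter.mp hxin).2
    rwa [hfx] at this
  -- fiber of i0 is inside the complement of S
  have hfib0 : X.filter (fun y => f y = i0) ⊆ X.filter (fun y => f y ∉ S) := by
    intro y hy
    rw [Finset.mem_filter] at hy ⊢
    exact ⟨hy.1, by rw [hy.2]; exact hfxS⟩
  -- every value in S has fiber size ≥ s (swap argument)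
  have hswap : ∀ i ∈ S, s ≤ (X.filter (fun y => f y = i)).card := by
    intro i hiS
    by_contra hlt
    push_neg at hlt
    have hS' : (insert i0 (S.erase i)).card < r := by
      have ha := Finset.card_insert_le i0 (S.erase i)
      have hb := Finset.card_erase_of_mem hiS
      have hc : 0 < S.card := Finset.card_pos.mpr ⟨i, hiS⟩
      omega
    have hQ' := hQ _ hS'
    have hsub2 : X.filter (fun y => f y ∉ insert i0 (S.erase i)) ⊆
        ((X.filter (fun y => f y ∉ S)) \ (X.filter (fun y => f y = i0))) ∪
          X.filter (fun y => f y = i) := by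
      intro y hy
      simp only [Finset.mem_filter, Finset.mem_insert, Finset.mem_erase, Finset.mem_union,
        Finset.mem_sdiff] at hy ⊢
      push_neg at hy
      by_cases h : f y = i
      · tauto
      · tauto
    have hc1 := Finset.card_sdiff_of_subset hfib0
    have hc2 := Finset.card_union_le
      ((X.filter (fun y => f y ∉ S)) \ (X.filter (fun y => f y = i0)))
      (X.filter (fun y => f y = i))
    have hc3 := Finset.card_le_card hsub2
    have hc4 := Finset.card_le_card hfib0
    omega
  -- S has exactly r - 1 elements
  have hScard_eq : S.card = r - 1 := by
    by_contra h
    have hS' : (insert i0 S).card < r := by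
      have := Finset.card_insert_le i0 S
      omega
    have hQ' := hQ _ hS'
    have hsub2 : X.filter (fun y => f y ∉ insert i0 S) ⊆
        (X.filter (fun y => f y ∉ S)) \ (X.filter (fun y => f y = i0)) := by
      intro y hy
      simp only [Finset.mem_filter, Finset.mem_insert, Finset.mem_sdiff] at hy ⊢
      push_neg at hy
      tauto
    have hc1 := Finset.card_sdiff_of_subset hfib0
    have hc3 := Finset.card_le_card hsub2
    have hc4 := Finset.card_le_card hfib0
    omega
  -- all fibers of values in S have size exactly s, so the "top" part has size (r-1)*s
  have hT : (X.filter (fun y => f y ∈ S)).card = (r - 1) * s := by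
    rw [Finset.card_eq_sum_card_fiberwise
      (f := f) (s := X.filter (fun y => f y ∈ S)) (t := S) (fun y hy => (Finset.mem_filter.mp hy).2)]
    have hterm : ∀ i ∈ S, ((X.filter (fun y => f y ∈ S)).filter (fun y => f y = i)).card = s := by
      intro i hiS
      have he : (X.filter (fun y => f y ∈ S)).filter (fun y => f y = i) =
          X.filter (fun y => f y = i) := by
        ext y
        simp only [Finset.mem_filter, Finset.filter_filter]
        constructor
        · rintro ⟨hyX, _, h⟩; exact ⟨hyX, h⟩
        · rintro ⟨hyX, h⟩; exact ⟨hyX, h ▸ hiS, h⟩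
      rw [he]
      exact le_antisymm (hfib_le i) (hswap i hiS)
    rw [Finset.sum_congr rfl hterm, Finset.sum_const, hScard_eq, smul_eq_mul]
  have hsplit := Finset.card_filter_add_card_filter_not
    (s := X) (p := fun y => f y ∈ S)
  refine ⟨s, hs1, ?_, hfib_le⟩
  have hne : (X.filter (fun y => ¬ f y ∈ S)).card = (X.filter (fun y => f y ∉ S)).card := rfl
  rw [Nat.mul_comm]
  omega
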